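/- Let p be a probability distribution on a finite set X□ ⊆ ℝ₊^m and ρ ∈ (0,1) ∪ (1,∞). With notation as in the CE-growth decomposition (p̃ the 1/ρ-tilted law, q̄_b the normalized wealth law, Z_q the wealth partition function), for every portfolio b with ⟨b,x⟩ > 0 for all x ∈ X□: if ρ < 1 then (1/(1−ρ))·Σ_x p(x)⟨b,x⟩^{1−ρ} ≤ (1/(1−ρ))·exp((1−ρ)·(−H_ρ(p̃) + log Z_q)), and the analogous inequality (with reversed sign convention absorbed by the factor 1/(1−ρ) < 0) holds for ρ > 1. Equivalently, G_ρ ≤ −H_ρ(p̃) + log Z_q. -/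

import Mathlib

open Finset

theorem stmt_6 {m : ℕ} (S : Finset (Fin m → ℝ)) (p : (Fin m → ℝ) → ℝ)
    (ρ : ℝ) (b : Fin m → ℝ)
    (hS : ∀ x ∈ S, ∀ i, 0 ≤ x i)
    (hρ : ρ ∈ Set.Ioo (0:ℝ) 1 ∪ Set.Ioi 1)
    (hp0 : ∀ x ∈ S, 0 ≤ p x) (hp1 : ∑ x ∈ S, p x = 1)
    (hppos : ∃ x ∈ S, 0 < p x)
    (hb0 : ∀ i, 0 ≤ b i) (hb1 : ∑ i, b i = 1)
    (hb : ∀ x ∈ S, 0 < ∑ i, b i * x i)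
    (Zp Zq Hρ : ℝ) (ptilde : (Fin m → ℝ) → ℝ)
    (hZp : Zp = ∑ x ∈ S, p x ^ (1/ρ))
    (hZq : Zq = ∑ x ∈ S, ∑ i, b i * x i)
    (hpt : ptilde = fun x => p x ^ (1/ρ) / Zp)
    (hH : Hρ = (1/(1-ρ)) * Real.log (∑ x ∈ S, ptilde x ^ ρ)) :
    (1/(1-ρ)) * (∑ x ∈ S, p x * (∑ i, b i * x i) ^ (1-ρ)) ≤
      (1/(1-ρ)) * Real.exp ((1-ρ) * (-Hρ + Real.log Zq)) ∧
    (1/(1-ρ)) * Real.log (∑ x ∈ S, p x * (∑ i, b i * x i) ^ (1-ρ)) ≤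
      -Hρ + Real.log Zq := by
  obtain ⟨x₀, hx₀S, hx₀p⟩ := hppos
  have hρ0 : 0 < ρ := by
    rcases hρ with h | h
    · exact h.1
    · exact lt_trans one_pos h
  have hρ1 : ρ ≠ 1 := by
    rcases hρ with h | h
    · exact ne_of_lt h.2
    · exact ne_of_gt h
  have h1ρ : (1:ℝ) - ρ ≠ 0 := sub_ne_zero.mpr (Ne.symm hρ1)
  have hZppos : 0 < Zp := by
    rw [hZp]
    refine Finset.sum_pos' (fun x hx => Real.rpow_nonneg (hp0 x hx) _) ?_
    exact ⟨x₀, hx₀S, Real.rpow_pos_of_pos hx₀p _⟩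
  have hZqpos : 0 < Zq := by
    rw [hZq]
    exact Finset.sum_pos (fun x hx => hb x hx) ⟨x₀, hx₀S⟩
  set A : ℝ := ∑ x ∈ S, p x * (∑ i, b i * x i) ^ (1-ρ) with hA
  have hApos : 0 < A := by
    refine Finset.sum_pos' (fun x hx =>
      mul_nonneg (hp0 x hx) (Real.rpow_nonneg (hb x hx).le _)) ?_
    exact ⟨x₀, hx₀S, mul_pos hx₀p (Real.rpow_pos_of_pos (hb x₀ hx₀S) _)⟩
  -- Compute the Rényi entropy of ptilde
  have hpt2 : ∑ x ∈ S, ptilde x ^ ρ = Zp ^ (-ρ) := by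
    rw [hpt]
    have hcong : ∀ x ∈ S, (p x ^ (1/ρ) / Zp) ^ ρ = p x * Zp ^ (-ρ) := by
      intro x hx
      rw [Real.div_rpow (Real.rpow_nonneg (hp0 x hx) _) hZppos.le,
        ← Real.rpow_mul (hp0 x hx), one_div, inv_mul_cancel₀ hρ0.ne',
        Real.rpow_one, Real.rpow_neg hZppos.le, div_eq_mul_inv]
    rw [Finset.sum_congr rfl hcong, ← Finset.sum_mul, hp1, one_mul]
  have hHval : Hρ = (1/(1-ρ)) * (-ρ * Real.log Zp) := by
    rw [hH, hpt2, Real.log_rpow hZppos]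
  have hBkey : Real.exp ((1-ρ) * (-Hρ + Real.log Zq)) = Zp ^ ρ * Zq ^ (1-ρ) := by
    have h1 : (1-ρ) * (-Hρ + Real.log Zq) = ρ * Real.log Zp + (1-ρ) * Real.log Zq := by
      rw [hHval]; field_simp
    rw [h1, Real.exp_add, Real.rpow_def_of_pos hZppos, Real.rpow_def_of_pos hZqpos,
      mul_comm ρ, mul_comm (1-ρ)]
  set B : ℝ := Zp ^ ρ * Zq ^ (1-ρ) with hB
  have hBpos : 0 < B :=
    mul_pos (Real.rpow_pos_of_pos hZppos _) (Real.rpow_pos_of_pos hZqpos _)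
  -- key inequality, by cases
  have hkey : ((1:ℝ)/(1-ρ)) * A ≤ (1/(1-ρ)) * B ∧
      (1/(1-ρ)) * Real.log A ≤ (1/(1-ρ)) * Real.log B := by
    rcases hρ with h | h
    · -- 0 < ρ < 1 : A ≤ B by Hölder
      have h1ρpos : 0 < 1 - ρ := by linarith [h.2]
      have hconj : (1/ρ).HolderConjugate (1/(1-ρ)) := by
        rw [Real.holderConjugate_iff]; constructor
        · rw [lt_div_iff₀ hρ0, one_mul]; exact h.2
        · rw [one_div, one_div, inv_inv, inv_inv]; ring
      have hAB : A ≤ B := by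
        have hh := Real.inner_le_Lp_mul_Lq_of_nonneg S hconj
          (f := p) (g := fun x => (∑ i, b i * x i) ^ (1-ρ))
          hp0 (fun x hx => Real.rpow_nonneg (hb x hx).le _)
        have e1 : ∀ x ∈ S, ((∑ i, b i * x i) ^ (1-ρ)) ^ (1/(1-ρ)) = ∑ i, b i * x i := by
          intro x hx
          rw [← Real.rpow_mul (hb x hx).le, mul_one_div, div_self h1ρ, Real.rpow_one]
        rw [Finset.sum_congr rfl e1, one_div_one_div, one_div_one_div, ← hZp, ← hZq] at hh
        exact hh
      constructor
      · exact mul_le_mul_of_nonneg_left hAB (by positivity)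
      · exact mul_le_mul_of_nonneg_left (Real.log_le_log hApos hAB) (by positivity)
    · -- ρ > 1 : B ≤ A by (reverse) Hölder
      have hρgt : (1:ℝ) < ρ := h
      have h1ρneg : 1 - ρ < 0 := by linarith
      have hρ1pos : 0 < ρ - 1 := by linarith
      have hconj : ρ.HolderConjugate (ρ/(ρ-1)) := by
        rw [Real.holderConjugate_iff]; constructor
        · exact hρgt
        · rw [inv_div]
          field_simp
          ring
      have hAB : B ≤ A := by
        have hh := Real.inner_le_Lp_mul_Lq_of_nonneg S hconj
          (f := fun x => (p x * (∑ i, b i * x i) ^ (1-ρ)) ^ (1/ρ))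
          (g := fun x => (∑ i, b i * x i) ^ ((ρ-1)/ρ))
          (fun x hx => Real.rpow_nonneg
            (mul_nonneg (hp0 x hx) (Real.rpow_nonneg (hb x hx).le _)) _)
          (fun x hx => Real.rpow_nonneg (hb x hx).le _)
        have e0 : ∀ x ∈ S, (p x * (∑ i, b i * x i) ^ (1-ρ)) ^ (1/ρ) *
            (∑ i, b i * x i) ^ ((ρ-1)/ρ) = p x ^ (1/ρ) := by
          intro x hx
          rw [Real.mul_rpow (hp0 x hx) (Real.rpow_nonneg (hb x hx).le _),
            ← Real.rpow_mul (hb x hx).le, mul_assoc,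
            ← Real.rpow_add (hb x hx)]
          have : (1-ρ) * (1/ρ) + (ρ-1)/ρ = 0 := by field_simp; ring
          rw [this, Real.rpow_zero, mul_one]
        have e1 : ∀ x ∈ S, ((p x * (∑ i, b i * x i) ^ (1-ρ)) ^ (1/ρ)) ^ ρ =
            p x * (∑ i, b i * x i) ^ (1-ρ) := by
          intro x hx
          rw [← Real.rpow_mul
            (mul_nonneg (hp0 x hx) (Real.rpow_nonneg (hb x hx).le _)),
            one_div, inv_mul_cancel₀ hρ0.ne', Real.rpow_one]
        have e2 : ∀ x ∈ S, ((∑ i, b i * x i) ^ ((ρ-1)/ρ)) ^ (ρ/(ρ-1)) = ∑ i, b i * x i := by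
          intro x hx
          rw [← Real.rpow_mul (hb x hx).le, div_mul_div_comm, mul_comm,
            div_self (by positivity), Real.rpow_one]
        rw [Finset.sum_congr rfl e0, Finset.sum_congr rfl e1, Finset.sum_congr rfl e2,
          ← hZp, ← hZq, ← hA] at hh
        -- hh : Zp ≤ A ^ (1/ρ) * Zq ^ (1/(ρ/(ρ-1)))
        have h2 : 1/(ρ/(ρ-1)) = (ρ-1)/ρ := one_div_div _ _
        rw [h2] at hh
        -- raise to power ρ
        have h3 : Zp ^ ρ ≤ A * Zq ^ (ρ-1) := by
          calc Zp ^ ρ ≤ (A ^ (1/ρ) * Zq ^ ((ρ-1)/ρ)) ^ ρ :=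
                Real.rpow_le_rpow hZppos.le hh hρ0.le
            _ = A * Zq ^ (ρ-1) := by
                rw [Real.mul_rpow (Real.rpow_nonneg hApos.le _)
                  (Real.rpow_nonneg hZqpos.le _),
                  ← Real.rpow_mul hApos.le, ← Real.rpow_mul hZqpos.le,
                  one_div, inv_mul_cancel₀ hρ0.ne', Real.rpow_one,
                  div_mul_cancel₀ _ hρ0.ne']
        have h4 : Zq ^ ((1:ℝ)-ρ) = (Zq ^ (ρ-1))⁻¹ := by
          rw [← Real.rpow_neg hZqpos.le, neg_sub]
        rw [hB, h4, mul_inv_le_iff₀ (Real.rpow_pos_of_pos hZqpos _)]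
        exact h3
      constructor
      · have hfac : (1:ℝ)/(1-ρ) ≤ 0 := by
          apply div_nonpos_of_nonneg_of_nonpos <;> linarith
        exact mul_le_mul_of_nonpos_left hAB hfac
      · have hfac : (1:ℝ)/(1-ρ) ≤ 0 := by
          apply div_nonpos_of_nonneg_of_nonpos <;> linarith
        exact mul_le_mul_of_nonpos_left (Real.log_le_log hBpos hAB) hfac
  refine ⟨?_, ?_⟩
  · rw [hBkey]; exact hkey.1
  · have hlogB : Real.log B = (1-ρ) * (-Hρ + Real.log Zq) := by
      rw [← hBkey, Real.log_exp]
    calc (1/(1-ρ)) * Real.log A ≤ (1/(1-ρ)) * Real.log B := hkey.2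
      _ = -Hρ + Real.log Zq := by rw [hlogB]; field_simp
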